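/- Every convex subset C of ℝⁿ is Δ-generated: a subset A ⊆ C is closed in C as soon as σ⁻¹(A) is closed in [0,1] for every continuous map σ : [0,1] → C. -/
import Mathlib

open Set Filter Topology

section Aux

variable {n : ℕ} (v : ℕ → (Fin n → ℝ))

/-- piecewise-linear interpolation along the sequence `v`. -/
noncomputable def plpath (s : ℝ) : Fin n → ℝ :=
  v ⌊s⌋₊ + (s - (⌊s⌋₊ : ℝ)) • (v (⌊s⌋₊ + 1) - v ⌊s⌋₊)

/-- the linear piece. -/
noncomputable def plpiece (k : ℕ) (s : ℝ) : Fin n → ℝ :=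
  v k + (s - (k : ℝ)) • (v (k + 1) - v k)

lemma plpiece_cont (k : ℕ) : Continuous (plpiece v k) := by
  unfold plpiece; fun_prop

lemma plpath_eqOn_Iio : EqOn (plpath v) (plpiece v 0) (Iio (1 : ℝ)) := by
  intro s hs
  have : ⌊s⌋₊ = 0 := Nat.floor_eq_zero.2 hs
  simp [plpath, plpiece, this]

lemma plpath_eq_nat (k : ℕ) : plpath v k = v k := by
  simp [plpath]

lemma plpath_eqOn_Ico (k : ℕ) : EqOn (plpath v) (plpiece v k) (Ico (k : ℝ) (k + 1)) := by
  intro s hs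
  have h0 : (0 : ℝ) ≤ s := le_trans (by positivity) hs.1
  have : ⌊s⌋₊ = k := (Nat.floor_eq_iff h0).2 ⟨hs.1, by exact_mod_cast hs.2⟩
  simp [plpath, plpiece, this]

lemma plpath_eqOn_Ioc (k : ℕ) : EqOn (plpath v) (plpiece v k) (Ioc (k : ℝ) (k + 1)) := by
  intro s hs
  rcases lt_or_eq_of_le hs.2 with h | h
  · exact plpath_eqOn_Ico v k ⟨hs.1.le, h⟩
  · subst h
    have : ((k : ℝ) + 1) = ((k + 1 : ℕ) : ℝ) := by push_cast; ring
    rw [this, plpath_eq_nat]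
    show _ = plpiece v k ((k+1:ℕ):ℝ)
    unfold plpiece
    push_cast
    module

lemma plpath_continuous : Continuous (plpath v) := by
  rw [continuous_iff_continuousAt]
  intro s
  rcases lt_or_ge s 1 with h1 | h1
  · exact ((plpiece_cont v 0).continuousAt).congr
      ((plpath_eqOn_Iio v).eventuallyEq_of_mem (Iio_mem_nhds h1)).symm
  · have hms : ((⌊s⌋₊ : ℕ) : ℝ) ≤ s := Nat.floor_le (by linarith)
    rcases eq_or_lt_of_le hms with heq | hlt
    · -- s is a natural number ≥ 1
      have hm1 : 1 ≤ ⌊s⌋₊ := Nat.le_floor (by exact_mod_cast h1)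
      obtain ⟨j, hj⟩ : ∃ j, ⌊s⌋₊ = j + 1 := ⟨⌊s⌋₊ - 1, (Nat.succ_pred_eq_of_pos hm1).symm⟩
      have heq : ((j : ℝ) + 1) = s := by rw [← heq, hj]; push_cast; ring
      have hleft : ContinuousWithinAt (plpath v) (Iic s) s := by
        refine ((plpiece_cont v j).continuousWithinAt).congr_of_eventuallyEq ?_ ?_
        · filter_upwards [inter_mem_nhdsWithin (Iic s)
            (Ioi_mem_nhds (show (j:ℝ) < s by linarith))] with t ht
          obtain ⟨ht1, ht2⟩ := ht
          rw [mem_Iic] at ht1; rw [mem_Ioi] at ht2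
          exact plpath_eqOn_Ioc v j ⟨ht2, by linarith⟩
        · exact plpath_eqOn_Ioc v j ⟨by linarith, by linarith⟩
      have hright : ContinuousWithinAt (plpath v) (Ici s) s := by
        refine ((plpiece_cont v (j+1)).continuousWithinAt).congr_of_eventuallyEq ?_ ?_
        · filter_upwards [inter_mem_nhdsWithin (Ici s)
            (Iio_mem_nhds (show s < (j:ℝ)+1+1 by linarith))] with t ht
          obtain ⟨ht1, ht2⟩ := ht
          rw [mem_Ici] at ht1; rw [mem_Iio] at ht2
          refine plpath_eqOn_Ico v (j+1) ⟨by push_cast; linarith, by push_cast; linarith⟩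
        · exact plpath_eqOn_Ico v (j+1) ⟨by push_cast; linarith, by push_cast; linarith⟩
      have hu := hleft.union hright
      rwa [Iic_union_Ici, continuousWithinAt_univ] at hu
    · -- ⌊s⌋₊ < s < ⌊s⌋₊ + 1
      have hsub : Ioo ((⌊s⌋₊ : ℕ) : ℝ) (⌊s⌋₊ + 1) ∈ 𝓝 s :=
        Ioo_mem_nhds hlt (Nat.lt_floor_add_one s)
      exact ((plpiece_cont v ⌊s⌋₊).continuousAt).congr
        (((plpath_eqOn_Ioc v ⌊s⌋₊).mono Ioo_subset_Ioc_self).eventuallyEq_of_mem hsub).symm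

lemma plpath_mem {D : Set (Fin n → ℝ)} (hD : Convex ℝ D) {s : ℝ} (hs : 0 ≤ s)
    (h1 : v ⌊s⌋₊ ∈ D) (h2 : v (⌊s⌋₊ + 1) ∈ D) : plpath v s ∈ D := by
  have hfl : (⌊s⌋₊ : ℝ) ≤ s := Nat.floor_le hs
  have hfl2 : s < (⌊s⌋₊ : ℝ) + 1 := Nat.lt_floor_add_one s
  have : plpath v s = (1 - (s - ⌊s⌋₊)) • v ⌊s⌋₊ + (s - (⌊s⌋₊ : ℝ)) • v (⌊s⌋₊ + 1) := by
    simp [plpath]; module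
  rw [this]
  exact hD h1 h2 (by linarith) (by linarith) (by ring)

end Aux

/-- Every convex subset `C` of `ℝⁿ` is Δ-generated: a subset `A ⊆ C` is closed in `C`
(with the subspace topology) as soon as `σ ⁻¹ A` is closed for every continuous
`σ : [0,1] → C`. -/
theorem convex_deltaGenerated {n : ℕ} (C : Set (Fin n → ℝ)) (hC : Convex ℝ C)
    (A : Set C)
    (h : ∀ σ : Set.Icc (0 : ℝ) 1 → C, Continuous σ → IsClosed (σ ⁻¹' A)) :
    IsClosed A := by
  refine IsSeqClosed.isClosed ?_
  intro u p hu hp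
  set x : Fin n → ℝ := (p : Fin n → ℝ) with hx
  set v : ℕ → (Fin n → ℝ) := fun k => (u k : Fin n → ℝ) with hv
  have hvC : ∀ k, v k ∈ C := fun k => (u k).2
  have hvx : Tendsto v atTop (𝓝 x) := (continuous_subtype_val.tendsto p).comp hp
  -- the path
  set f : ℝ → (Fin n → ℝ) := fun t => if t ≤ 0 then x else plpath v (1 / t - 1) with hf
  have hf0 : f 0 = x := if_pos le_rfl
  have hfk : ∀ k : ℕ, f (1 / (k + 1)) = v k := by
    intro k
    have hk : (0:ℝ) < 1 / (k+1) := by positivity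
    rw [hf]; simp only
    rw [if_neg (not_le.2 hk), one_div_one_div]
    have : (k : ℝ) + 1 - 1 = ((k : ℕ) : ℝ) := by ring
    rw [this, plpath_eq_nat]
  have hfC : ∀ t ∈ Icc (0:ℝ) 1, f t ∈ C := by
    intro t ht
    rw [hf]; simp only
    split_ifs with h0
    · exact p.2
    · push_neg at h0
      have h1t : 1 ≤ 1 / t := (le_div_iff₀ h0).2 (by linarith [ht.2])
      exact plpath_mem v hC (by linarith) (hvC _) (hvC _)
  have hfcont : ContinuousOn f (Icc 0 1) := by
    intro t ht
    rcases eq_or_lt_of_le ht.1 with h0 | h0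
    · -- continuity at 0 within
      rw [Metric.continuousWithinAt_iff]
      intro ε hε
      obtain ⟨N, hN⟩ := Metric.tendsto_atTop.1 hvx ε hε
      refine ⟨1 / (N + 1), by positivity, ?_⟩
      intro t' ht' hd
      rw [← h0] at hd ⊢
      rw [hf]; simp only
      rw [if_pos le_rfl]
      split_ifs with h0'
      · simp [hε]
      · push_neg at h0'
        have ht'' : t' < 1 / (N+1) := by
          have hd' := hd
          rw [Real.dist_eq, sub_zero, abs_of_pos h0'] at hd'
          exact hd'
        have hNs : (N : ℝ) < 1 / t' - 1 := by
          have : (N:ℝ) + 1 < 1 / t' := by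
            rw [lt_div_iff₀ h0']
            calc ((N:ℝ)+1) * t' < ((N:ℝ)+1) * (1/(N+1)) := by
                  apply mul_lt_mul_of_pos_left ht'' (by positivity)
              _ = 1 := by field_simp
          linarith
        have hs0 : (0:ℝ) ≤ 1 / t' - 1 := le_trans (by positivity) hNs.le
        have hfloor : N ≤ ⌊1 / t' - 1⌋₊ := Nat.le_floor hNs.le
        have hmem : plpath v (1 / t' - 1) ∈ Metric.ball x ε := by
          refine plpath_mem v (convex_ball x ε) hs0 ?_ ?_
          · exact Metric.mem_ball.2 (hN _ hfloor)
          · exact Metric.mem_ball.2 (hN _ (le_trans hfloor (Nat.le_succ _)))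
        simpa [dist_comm] using Metric.mem_ball.1 hmem
    · -- t > 0 : f is continuous at t
      refine ContinuousAt.continuousWithinAt ?_
      have hev : (fun t' => plpath v (1 / t' - 1)) =ᶠ[𝓝 t] f := by
        filter_upwards [Ioi_mem_nhds h0] with t' ht'
        rw [hf]; simp only
        rw [if_neg (not_le.2 ht')]
      refine ContinuousAt.congr ?_ hev
      exact (plpath_continuous v).continuousAt.comp
        (((continuousAt_const.div continuousAt_id (ne_of_gt h0))).sub continuousAt_const)
  set σ : Icc (0:ℝ) 1 → C := fun t => ⟨f t, hfC t t.2⟩ with hσdef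
  have hσ : Continuous σ :=
    Continuous.subtype_mk (continuousOn_iff_continuous_restrict.1 hfcont) _
  have hclosed := h σ hσ
  set tk : ℕ → Icc (0:ℝ) 1 := fun k => ⟨1/(k+1), ⟨by positivity, by
    rw [div_le_one (by positivity)]; linarith [Nat.cast_nonneg (α := ℝ) k]⟩⟩ with htkdef
  have htkA : ∀ k, tk k ∈ σ ⁻¹' A := by
    intro k
    have : σ (tk k) = u k := Subtype.ext (hfk k)
    simpa [this] using hu k
  have htk0 : Tendsto tk atTop (𝓝 ⟨0, le_rfl, zero_le_one⟩) := by
    rw [tendsto_subtype_rng]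
    simpa using tendsto_one_div_add_atTop_nhds_zero_nat
  have h0A : (⟨0, le_rfl, zero_le_one⟩ : Icc (0:ℝ) 1) ∈ σ ⁻¹' A :=
    hclosed.isSeqClosed htkA htk0
  have : σ ⟨0, le_rfl, zero_le_one⟩ = p := Subtype.ext hf0
  rwa [mem_preimage, this] at h0A
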